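/- Under the hypotheses of the preceding fiber-description setup (X ⊆ I^∞ compact nonempty; (m_i) strictly increasing; ε_i, δ_i > 0 with (a) ρ(u,v) < ε_{i+1} ⟹ ρ(p_{m_i,∞}(u), p_{m_i,∞}(v)) < δ_i, (b) 5·2^{-m_i} < ε_i, (c) δ_i < 2^{1−m_i}; M_i ⊆ I^{m_i} nonempty compact with M_i ⊆ N(X, η_i), η_i → 0; h_i : M_{i+1} → M_i continuous with ρ(h_i(u), p_{m_i,∞}(u)) < δ_i/2), suppose additionally that for every x ∈ X and every i ∈ ℕ the set N̄(p_{m_i,∞}(x), 2δ_i) ∩ M_i is nonempty. Then the induced map π : lim (M_i, h_i) → X is surjective. -/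

import Mathlib

open Set Filter Topology

noncomputable section

/-- The Hilbert cube `I^∞ = ∏_{i ≥ 1} [0,1]`; the index `i : ℕ` represents coordinate `i + 1`. -/
abbrev Iinf : Type := ℕ → unitInterval

/-- The metric `ρ(x, y) = Σ_{i=1}^∞ |x_i − y_i| / 2^i` on the Hilbert cube (whose topology is
the product topology carried by `Iinf`). -/
def rho (x y : Iinf) : ℝ := ∑' i : ℕ, |((x i : ℝ)) - (y i : ℝ)| / 2 ^ (i + 1)

/-- `I^k`, identified with the subset `I^k × {0}` of `I^∞` (all coordinates beyond `k` zero). -/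
def cubeFin (k : ℕ) : Set Iinf := {x | ∀ i, k ≤ i → x i = 0}

/-- `p_{k,∞} : I^∞ → I^k`, projection to the first `k` coordinates.  For `j ≤ k` it also
serves as `p_j^k : I^k → I^j`. -/
def proj (k : ℕ) (x : Iinf) : Iinf := fun i => if i < k then x i else 0

/-- `P × I^∞_k = {x ∈ I^∞ : p_{k,∞}(x) ∈ P}`, for `P ⊆ I^k`. -/
def cyl (k : ℕ) (P : Set Iinf) : Set Iinf := {x | proj k x ∈ P}

/-- `N(A, ε)`, the open `ε`-neighborhood of `A` in `(I^∞, ρ)`. -/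
def nbhd (A : Set Iinf) (ε : ℝ) : Set Iinf := {x | ∃ a ∈ A, rho x a < ε}

/-- The interior of `P` relative to the subspace `I^m ⊆ I^∞`. -/
def relInterior (m : ℕ) (P : Set Iinf) : Set Iinf :=
  {x ∈ cubeFin m | ∃ U : Set Iinf, IsOpen U ∧ x ∈ U ∧ U ∩ cubeFin m ⊆ P}

/-! ### Auxiliary facts about `rho` -/

lemma coord_abs_le_one (x y : Iinf) (i : ℕ) : |((x i : ℝ)) - (y i : ℝ)| ≤ 1 := by
  rw [abs_le]
  constructor
  · linarith [(x i).2.1, (y i).2.2]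
  · linarith [(x i).2.2, (y i).2.1]

lemma half_summable : Summable (fun i : ℕ => ((1:ℝ)/2) ^ (i+1)) := by
  have := summable_geometric_two.mul_left ((1:ℝ)/2)
  refine this.congr (fun i => ?_)
  rw [← pow_succ']

lemma rho_term_le (x y : Iinf) (i : ℕ) :
    |((x i : ℝ)) - (y i : ℝ)| / 2 ^ (i + 1) ≤ ((1:ℝ)/2) ^ (i+1) := by
  rw [one_div, inv_pow, ← one_div]
  apply div_le_div_of_nonneg_right (coord_abs_le_one x y i) (by positivity) |>.trans_eq rfl

lemma rho_summable (x y : Iinf) :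
    Summable (fun i : ℕ => |((x i : ℝ)) - (y i : ℝ)| / 2 ^ (i + 1)) :=
  Summable.of_nonneg_of_le (fun i => by positivity) (fun i => rho_term_le x y i) half_summable

lemma rho_nonneg (x y : Iinf) : 0 ≤ rho x y :=
  tsum_nonneg (fun i => by positivity)

lemma rho_comm (x y : Iinf) : rho x y = rho y x := by
  unfold rho
  exact tsum_congr (fun i => by rw [abs_sub_comm])

lemma rho_triangle (x y z : Iinf) : rho x z ≤ rho x y + rho y z := by
  unfold rho
  rw [← Summable.tsum_add (rho_summable x y) (rho_summable y z)]
  refine Summable.tsum_le_tsum (fun i => ?_) (rho_summable x z)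
    ((rho_summable x y).add (rho_summable y z))
  rw [← add_div]
  exact div_le_div_of_nonneg_right (abs_sub_le _ _ _) (by positivity)

lemma rho_coord_le (x y : Iinf) (j : ℕ) :
    |((x j : ℝ)) - (y j : ℝ)| / 2 ^ (j + 1) ≤ rho x y :=
  Summable.le_tsum (rho_summable x y) j (fun i _ => by positivity)

lemma rho_proj_le (k : ℕ) (x : Iinf) : rho (proj k x) x ≤ 1 / 2 ^ k := by
  have hb : Summable (fun i : ℕ => if i < k then (0:ℝ) else ((1:ℝ)/2) ^ (i+1)) := by
    refine Summable.of_nonneg_of_le (fun i => by positivity) (fun i => ?_) half_summable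
    split
    · positivity
    · exact le_rfl
  have h1 : rho (proj k x) x ≤ ∑' i : ℕ, (if i < k then (0:ℝ) else ((1:ℝ)/2) ^ (i+1)) := by
    refine Summable.tsum_le_tsum (fun i => ?_) (rho_summable _ _) hb
    by_cases hi : i < k
    · simp [proj, hi]
    · simp only [if_neg hi]
      exact rho_term_le _ _ i
  refine h1.trans (le_of_eq ?_)
  have h2 := (Summable.sum_add_tsum_nat_add (f := fun i : ℕ => if i < k then (0:ℝ) else ((1:ℝ)/2) ^ (i+1)) k hb).symm
  rw [h2]
  have h3 : ∀ i : ℕ, (if i + k < k then (0:ℝ) else ((1:ℝ)/2) ^ (i+k+1)) = ((1:ℝ)/2)^(k+1) * ((1:ℝ)/2)^i := by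
    intro i
    rw [if_neg (by omega)]
    ring
  have h4 : (∑ i ∈ Finset.range k, (if i < k then (0:ℝ) else ((1:ℝ)/2) ^ (i+1))) = 0 := by
    apply Finset.sum_eq_zero
    intro i hi
    rw [if_pos (Finset.mem_range.mp hi)]
  calc (∑ i ∈ Finset.range k, (if i < k then (0:ℝ) else ((1:ℝ)/2) ^ (i+1)))
        + ∑' i : ℕ, (if i + k < k then (0:ℝ) else ((1:ℝ)/2) ^ (i+k+1))
      = ∑' i : ℕ, ((1:ℝ)/2)^(k+1) * ((1:ℝ)/2)^i := by rw [h4, zero_add]; exact tsum_congr h3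
    _ = ((1:ℝ)/2)^(k+1) * 2 := by rw [tsum_mul_left, tsum_geometric_two]
    _ = 1 / 2 ^ k := by rw [pow_succ, one_div, inv_pow]; ring

lemma rho_continuous (c : Iinf) : Continuous (fun z : Iinf => rho z c) := by
  unfold rho
  refine continuous_tsum (fun i => ?_) half_summable (fun i z => ?_)
  · exact (((continuous_subtype_val.comp (continuous_apply i)).sub continuous_const).abs).div_const _
  · rw [Real.norm_eq_abs, abs_of_nonneg (by positivity)]
    exact rho_term_le z c i

/-! ### Pushing down along the bonding maps -/

section Tdown

variable (M : ℕ → Set Iinf) (h : ∀ i, M (i + 1) → Iinf) (hhmem : ∀ i u, h i u ∈ M i)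

/-- One step down. -/
def stepMap (i : ℕ) (u : M (i + 1)) : M i := ⟨h i u, hhmem i u⟩

/-- Push an element of `M (i + n)` down to `M i`. -/
def Tdown (i : ℕ) : ∀ n, M (i + n) → M i
  | 0, u => u
  | n+1, u => Tdown i n (stepMap M h hhmem (i + n) u)

lemma h_congr {k k' : ℕ} (e : k = k') (u : M (k + 1)) (v : M (k' + 1))
    (huv : (u : Iinf) = v) : h k u = h k' v := by
  subst e
  rw [Subtype.ext huv]

lemma Tdown_congr {k k' : ℕ} (e : k = k') (i : ℕ) (u : M (i + k)) (v : M (i + k'))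
    (huv : (u : Iinf) = v) :
    ((Tdown M h hhmem i k u : Iinf)) = Tdown M h hhmem i k' v := by
  subst e
  rw [Subtype.ext huv]

lemma Tdown_succ : ∀ (n i : ℕ) (u : M (i + (n + 1))) (v : M (i + 1 + n)),
    (u : Iinf) = (v : Iinf) →
    ((Tdown M h hhmem i (n + 1) u : Iinf)) = h i (Tdown M h hhmem (i + 1) n v) := by
  intro n
  induction n with
  | zero =>
    intro i u v huv
    exact h_congr M h (e := rfl) u v huv
  | succ n ih =>
    intro i u v huv
    have hval : h (i + (n + 1)) u = h (i + 1 + n) v :=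
      h_congr M h (e := by show i + (n+1) = i+1+n; omega) u v huv
    exact ih i (stepMap M h hhmem (i + (n + 1)) u) (stepMap M h hhmem (i + 1 + n) v) hval

lemma Tdown_close (x : Iinf) (m : ℕ → ℕ) (δ : ℕ → ℝ)
    (key : ∀ j (u : M (j + 1)), rho (u : Iinf) (proj (m (j + 1)) x) ≤ 2 * δ (j + 1) →
      rho (h j u) (proj (m j) x) ≤ 2 * δ j) :
    ∀ (n i : ℕ) (u : M (i + n)), rho (u : Iinf) (proj (m (i + n)) x) ≤ 2 * δ (i + n) →
      rho ((Tdown M h hhmem i n u : Iinf)) (proj (m i) x) ≤ 2 * δ i := by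
  intro n
  induction n with
  | zero => intro i u hu; exact hu
  | succ n ih =>
    intro i u hu
    exact ih i (stepMap M h hhmem (i + n) u) (key (i + n) u hu)

end Tdown

/-- Lemma `altAJR`(7) / `lowerstuff`. -/
theorem induced_map_surjective
    (X : Set Iinf) (hXne : X.Nonempty) (hXc : IsCompact X)
    (m : ℕ → ℕ) (hm : StrictMono m)
    (ε δ : ℕ → ℝ) (hε : ∀ i, 0 < ε i) (hδ : ∀ i, 0 < δ i)
    (hproj : ∀ (u v : Iinf) (i : ℕ), rho u v < ε (i + 1) →
      rho (proj (m i) u) (proj (m i) v) < δ i)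
    (hε5 : ∀ i, 5 / 2 ^ m i < ε i) (hδ2 : ∀ i, δ i < 2 / 2 ^ m i)
    (M : ℕ → Set Iinf) (hMne : ∀ i, (M i).Nonempty) (hMc : ∀ i, IsCompact (M i))
    (hMcube : ∀ i, M i ⊆ cubeFin (m i))
    (η : ℕ → ℝ) (hη : ∀ i, 0 < η i) (hη0 : Tendsto η atTop (𝓝 0))
    (hMX : ∀ i, M i ⊆ nbhd X (η i))
    (h : ∀ i, M (i + 1) → Iinf) (hhc : ∀ i, Continuous (h i))
    (hhmem : ∀ i u, h i u ∈ M i)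
    (hhclose : ∀ i (u : M (i + 1)), rho (h i u) (proj (m i) (u : Iinf)) < δ i / 2)
    (π : {a : ∀ i, M i // ∀ i, h i (a (i + 1)) = (a i : Iinf)} → Iinf)
    (hπlim : ∀ w, Tendsto (fun i => (w.1 i : Iinf)) atTop (𝓝 (π w)))
    (hπX : ∀ w, π w ∈ X)
    (hball : ∀ x ∈ X, ∀ i, ∃ y ∈ M i, rho y (proj (m i) x) ≤ 2 * δ i) :
    ∀ x ∈ X, ∃ w : {a : ∀ i, M i // ∀ i, h i (a (i + 1)) = (a i : Iinf)}, π w = x := by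
  classical
  intro x hx
  choose y hyM hyc using hball x hx
  -- the single-step estimate
  have key : ∀ j (u : M (j + 1)), rho (u : Iinf) (proj (m (j + 1)) x) ≤ 2 * δ (j + 1) →
      rho (h j u) (proj (m j) x) ≤ 2 * δ j := by
    intro j u hu
    have h1 : rho (u : Iinf) x < ε (j + 1) := by
      have t1 := rho_triangle (u : Iinf) (proj (m (j + 1)) x) x
      have t2 := rho_proj_le (m (j + 1)) x
      have t3 := hδ2 (j + 1)
      have t4 := hε5 (j + 1)
      have e : (5:ℝ) / 2 ^ (m (j + 1)) = 2 * (2 / 2 ^ (m (j + 1))) + 1 / 2 ^ (m (j + 1)) := by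
        ring
      linarith
    have h2 := hproj (u : Iinf) x j h1
    have h3 := hhclose j u
    have t5 := rho_triangle (h j u) (proj (m j) (u : Iinf)) (proj (m j) x)
    have := hδ j
    linarith
  haveI : ∀ i, CompactSpace ↥(M i) := fun i => isCompact_iff_compactSpace.mp (hMc i)
  -- the nested compact sets of "partial threads"
  let D : ℕ → Set (∀ i, ↥(M i)) := fun N =>
    {a | (∀ j, j < N → h j (a (j + 1)) = ((a j : Iinf))) ∧
      ∀ j, j ≤ N → rho ((a j : Iinf)) (proj (m j) x) ≤ 2 * δ j}
  have hDclosed : ∀ N, IsClosed (D N) := by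
    intro N
    have hD : D N =
        (⋂ j, ⋂ _ : j < N, {a : ∀ i, ↥(M i) | h j (a (j + 1)) = ((a j : Iinf))}) ∩
        (⋂ j, ⋂ _ : j ≤ N, {a : ∀ i, ↥(M i) |
          rho ((a j : Iinf)) (proj (m j) x) ≤ 2 * δ j}) := by
      ext a
      simp only [D, mem_setOf_eq, mem_inter_iff, mem_iInter]
    rw [hD]
    refine IsClosed.inter (isClosed_iInter fun j => isClosed_iInter fun _ => ?_)
      (isClosed_iInter fun j => isClosed_iInter fun _ => ?_)
    · exact isClosed_eq ((hhc j).comp (continuous_apply (j + 1)))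
        (continuous_subtype_val.comp (continuous_apply j))
    · exact isClosed_le ((rho_continuous (proj (m j) x)).comp
        (continuous_subtype_val.comp (continuous_apply j))) continuous_const
  have hDsub : ∀ N, D (N + 1) ⊆ D N := by
    intro N a ha
    exact ⟨fun j hj => ha.1 j (by omega), fun j hj => ha.2 j (by omega)⟩
  have hDne : ∀ N, (D N).Nonempty := by
    intro N
    have hyMc : ∀ i, i ≤ N → y N ∈ M (i + (N - i)) := by
      intro i hi
      rw [Nat.add_sub_cancel' hi]
      exact hyM N
    refine ⟨fun i => if hi : i ≤ N then Tdown M h hhmem i (N - i) ⟨y N, hyMc i hi⟩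
      else ⟨(hMne i).some, (hMne i).some_mem⟩, ?_, ?_⟩
    · intro j hj
      have hj1 : j + 1 ≤ N := hj
      have hj0 : j ≤ N := by omega
      simp only [dif_pos hj0, dif_pos hj1]
      have hn : N - j = (N - (j + 1)) + 1 := by omega
      have pf1 : y N ∈ M (j + ((N - (j + 1)) + 1)) := by
        have e : j + ((N - (j + 1)) + 1) = N := by omega
        rw [e]; exact hyM N
      have pf2 : y N ∈ M (j + 1 + (N - (j + 1))) := by
        have e : j + 1 + (N - (j + 1)) = N := by omega
        rw [e]; exact hyM N
      have c1 : ((Tdown M h hhmem j (N - j) ⟨y N, hyMc j hj0⟩ : Iinf)) =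
          Tdown M h hhmem j ((N - (j + 1)) + 1) ⟨y N, pf1⟩ :=
        Tdown_congr M h hhmem hn j _ _ rfl
      have c2 : ((Tdown M h hhmem j ((N - (j + 1)) + 1) ⟨y N, pf1⟩ : Iinf)) =
          h j (Tdown M h hhmem (j + 1) (N - (j + 1)) ⟨y N, pf2⟩) :=
        Tdown_succ M h hhmem (N - (j + 1)) j _ _ rfl
      have c3 : ((Tdown M h hhmem (j + 1) (N - (j + 1)) ⟨y N, pf2⟩ : Iinf)) =
          Tdown M h hhmem (j + 1) (N - (j + 1)) ⟨y N, hyMc (j + 1) hj1⟩ :=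
        Tdown_congr M h hhmem rfl (j + 1) _ _ rfl
      have c3' : Tdown M h hhmem (j + 1) (N - (j + 1)) ⟨y N, pf2⟩ =
          Tdown M h hhmem (j + 1) (N - (j + 1)) ⟨y N, hyMc (j + 1) hj1⟩ :=
        Subtype.ext c3
      rw [← c3', ← c2, ← c1]
    · intro j hj
      simp only [dif_pos hj]
      refine Tdown_close M h hhmem x m δ key (N - j) j _ ?_
      show rho (y N) (proj (m (j + (N - j))) x) ≤ 2 * δ (j + (N - j))
      have e : j + (N - j) = N := Nat.add_sub_cancel' hj
      rw [e]
      exact hyc N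
  obtain ⟨a, ha⟩ := IsCompact.nonempty_iInter_of_sequence_nonempty_isCompact_isClosed D
    hDsub hDne ((hDclosed 0).isCompact) hDclosed
  have hmemD : ∀ N, a ∈ D N := fun N => mem_iInter.mp ha N
  have hthread : ∀ i, h i (a (i + 1)) = (a i : Iinf) := fun i => (hmemD (i + 1)).1 i (by omega)
  refine ⟨⟨a, hthread⟩, ?_⟩
  have hclose : ∀ i, rho ((a i : Iinf)) x ≤ 5 / 2 ^ (m i) := by
    intro i
    have t1 := (hmemD i).2 i le_rfl
    have t2 := rho_proj_le (m i) x
    have t3 := rho_triangle ((a i : Iinf)) (proj (m i) x) x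
    have t4 := hδ2 i
    have e : (5:ℝ) / 2 ^ (m i) = 2 * (2 / 2 ^ (m i)) + 1 / 2 ^ (m i) := by ring
    linarith
  have hconv : Tendsto (fun i => ((a i : Iinf))) atTop (𝓝 x) := by
    rw [tendsto_pi_nhds]
    intro j
    rw [tendsto_subtype_rng]
    have hb : ∀ i : ℕ, |(((a i : Iinf) j : ℝ)) - (x j : ℝ)| ≤ 2 ^ (j + 1) * (5 * ((1:ℝ)/2) ^ i) := by
      intro i
      have t1 := rho_coord_le ((a i : Iinf)) x j
      have t2 := hclose i
      have t3 : (5:ℝ) / 2 ^ (m i) ≤ 5 * ((1:ℝ)/2) ^ i := by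
        have hmi : i ≤ m i := hm.le_apply
        have hp : (2:ℝ) ^ i ≤ 2 ^ (m i) := by
          apply pow_le_pow_right₀ (by norm_num) hmi
        calc (5:ℝ) / 2 ^ (m i) ≤ 5 / 2 ^ i := by
              apply div_le_div_of_nonneg_left (by norm_num) (by positivity) hp
          _ = 5 * ((1:ℝ)/2) ^ i := by rw [one_div, inv_pow]; ring
      have hp2 : (0:ℝ) < 2 ^ (j + 1) := by positivity
      calc |(((a i : Iinf) j : ℝ)) - (x j : ℝ)|
          = 2 ^ (j + 1) * (|(((a i : Iinf) j : ℝ)) - (x j : ℝ)| / 2 ^ (j + 1)) := by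
            field_simp
        _ ≤ 2 ^ (j + 1) * (5 * ((1:ℝ)/2) ^ i) :=
            mul_le_mul_of_nonneg_left (t1.trans (t2.trans t3)) hp2.le
    have hg : Tendsto (fun i : ℕ => 2 ^ (j + 1) * (5 * ((1:ℝ)/2) ^ i)) atTop (𝓝 0) := by
      have hpow := tendsto_pow_atTop_nhds_zero_of_lt_one
        (by norm_num : (0:ℝ) ≤ 1/2) (by norm_num : (1/2:ℝ) < 1)
      have := hpow.const_mul ((2:ℝ) ^ (j + 1) * 5)
      simpa [mul_assoc] using this
    rw [tendsto_iff_dist_tendsto_zero]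
    simp only [Real.dist_eq]
    exact squeeze_zero (fun i => abs_nonneg _) hb hg
  exact tendsto_nhds_unique (hπlim ⟨a, hthread⟩) hconv
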